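/- Let g : [0,T) → [0,∞) be continuous and satisfy g(t) ≤ a(t+1)^{−1/4} + b e^{−2νt} + ε ∫_0^t e^{−2ν(t−s)} g(s) ds for all t ∈ [0,T), with a, b, ν > 0. Then there exists ε₀ > 0 (depending only on ν) and C > 0 such that if 0 < ε < ε₀ then g(t) ≤ C a (t+1)^{−1/4} + C b e^{−νt} for all t ∈ [0,T). -/

import Mathlib

open Real MeasureTheory intervalIntegral

lemma texp_le (ν t : ℝ) (hν : 0 < ν) (ht : 0 ≤ t) :
    t * Real.exp (-ν * t) * (t + 1) ≤ 2/ν * (1 + 2/ν) := by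
  have key := Real.add_one_le_exp (ν*t/2)
  have hexp : 0 < Real.exp (ν*t/2) := Real.exp_pos _
  have hdν : (0:ℝ) < 2/ν := by positivity
  have h2ν : 2/ν * ν = 2 := by field_simp
  have hmul := mul_le_mul_of_nonneg_left key hdν.le
  have hexpand : 2/ν * (ν*t/2 + 1) = t + 2/ν := by field_simp
  rw [hexpand] at hmul
  have h1 : t * Real.exp (-(ν*t/2)) ≤ 2/ν := by
    rw [Real.exp_neg, mul_inv_le_iff₀ hexp]
    nlinarith
  have h2 : (t + 1) * Real.exp (-(ν*t/2)) ≤ 1 + 2/ν := by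
    rw [Real.exp_neg, mul_inv_le_iff₀ hexp]
    nlinarith
  have hsplit : Real.exp (-ν * t) = Real.exp (-(ν*t/2)) * Real.exp (-(ν*t/2)) := by
    rw [← Real.exp_add]; ring_nf
  calc t * Real.exp (-ν * t) * (t + 1)
      = (t * Real.exp (-(ν*t/2))) * ((t + 1) * Real.exp (-(ν*t/2))) := by rw [hsplit]; ring
    _ ≤ 2/ν * (1 + 2/ν) := by
        apply mul_le_mul h1 h2 (by positivity) (by positivity)

lemma texp_le' (ν t : ℝ) (hν : 0 < ν) (ht : 0 ≤ t) :
    t * Real.exp (-ν * t) ≤ 2/ν * (1 + 2/ν) * (t + 1) ^ (-(1/4) : ℝ) := by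
  have h1 : (0:ℝ) < t + 1 := by linarith
  rw [Real.rpow_neg h1.le, ← div_eq_mul_inv, le_div_iff₀ (by positivity)]
  calc t * Real.exp (-ν * t) * (t+1) ^ ((1/4):ℝ)
      ≤ t * Real.exp (-ν * t) * (t+1) := by
        apply mul_le_mul_of_nonneg_left _ (by positivity)
        calc (t+1) ^ ((1/4):ℝ) ≤ (t+1) ^ ((1:ℝ)) :=
              Real.rpow_le_rpow_of_exponent_le (by linarith) (by norm_num)
          _ = t + 1 := Real.rpow_one _
    _ ≤ 2/ν * (1 + 2/ν) := texp_le ν t hν ht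

lemma exp_lin_integral (c d a b : ℝ) (hc : c ≠ 0) :
    ∫ s in a..b, Real.exp (c*s + d) = (Real.exp (c*b+d) - Real.exp (c*a+d))/c := by
  have hder : ∀ x ∈ Set.uIcc a b,
      HasDerivAt (fun s => Real.exp (c*s+d)/c) (Real.exp (c*x+d)) x := by
    intro x _
    have h1 : HasDerivAt (fun s : ℝ => c*s+d) c x := by
      simpa using ((hasDerivAt_id x).const_mul c).add_const d
    have h2 := (h1.exp).div_const c
    simpa [mul_div_cancel_right₀ _ hc] using h2
  have hint : IntervalIntegrable (fun s => Real.exp (c*s+d)) volume a b :=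
    (Real.continuous_exp.comp (by continuity)).intervalIntegrable a b
  rw [intervalIntegral.integral_eq_sub_of_hasDerivAt hder hint]
  ring

lemma intB (ν t : ℝ) (hν : 0 < ν) (ht : 0 ≤ t) :
    (∫ s in (0:ℝ)..t, Real.exp (-2*ν*(t-s)) * Real.exp (-ν*s))
      ≤ (1/ν) * Real.exp (-ν*t) := by
  have hc : ∀ s : ℝ, Real.exp (-2*ν*(t-s)) * Real.exp (-ν*s)
      = Real.exp (ν*s + (-2*ν*t)) := by
    intro s; rw [← Real.exp_add]; ring_nf
  simp only [hc]
  rw [exp_lin_integral ν (-2*ν*t) 0 t hν.ne']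
  have e1 : ν*t + -2*ν*t = -ν*t := by ring
  have e2 : ν*0 + -2*ν*t = -2*ν*t := by ring
  rw [e1, e2, div_le_iff₀ hν]
  have := (Real.exp_pos (-2*ν*t)).le
  have h2 : (1/ν) * Real.exp (-ν*t) * ν = Real.exp (-ν*t) := by field_simp
  rw [h2]; linarith

lemma rpow_half_le (t : ℝ) (ht : 0 ≤ t) :
    (t/2 + 1) ^ (-(1/4) : ℝ) ≤ 2 * (t + 1) ^ (-(1/4) : ℝ) := by
  have h1 : (0:ℝ) < (t+1)/2 := by linarith
  have h2 : (t+1)/2 ≤ t/2 + 1 := by linarith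
  calc (t/2 + 1) ^ (-(1/4) : ℝ) ≤ ((t+1)/2) ^ (-(1/4) : ℝ) :=
        Real.rpow_le_rpow_of_nonpos h1 h2 (by norm_num)
    _ = (t+1) ^ (-(1/4) : ℝ) / (2:ℝ) ^ (-(1/4) : ℝ) :=
        Real.div_rpow (by linarith) (by norm_num) _
    _ = (t+1) ^ (-(1/4) : ℝ) * (2:ℝ) ^ ((1/4) : ℝ) := by
        rw [Real.rpow_neg (by norm_num : (0:ℝ) ≤ 2), div_eq_mul_inv, inv_inv]
    _ ≤ (t+1) ^ (-(1/4) : ℝ) * 2 := by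
        apply mul_le_mul_of_nonneg_left _ (by positivity)
        calc (2:ℝ) ^ ((1/4):ℝ) ≤ (2:ℝ) ^ ((1:ℝ)) :=
              Real.rpow_le_rpow_of_exponent_le (by norm_num) (by norm_num)
          _ = 2 := Real.rpow_one 2
    _ = 2 * (t+1) ^ (-(1/4) : ℝ) := mul_comm _ _

lemma intA (ν t : ℝ) (hν : 0 < ν) (ht : 0 ≤ t) :
    (∫ s in (0:ℝ)..t, Real.exp (-2*ν*(t-s)) * (s+1) ^ (-(1/4):ℝ))
      ≤ (1/ν + 2/ν*(1+2/ν)) * (t+1) ^ (-(1/4):ℝ) := by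
  have h02 : (0:ℝ) ≤ t/2 := by linarith
  have h2t : t/2 ≤ t := by linarith
  set f : ℝ → ℝ := fun s => Real.exp (-2*ν*(t-s)) * (s+1) ^ (-(1/4):ℝ) with hf_def
  have hfc : ContinuousOn f (Set.Icc 0 t) := by
    apply ContinuousOn.mul
    · exact (Real.continuous_exp.comp (by continuity)).continuousOn
    · exact (continuousOn_id.add continuousOn_const).rpow_const
        (fun x hx => Or.inl (by have := hx.1; intro h; change x + 1 = 0 at h; linarith))
  have int1 : IntervalIntegrable f volume 0 (t/2) :=
    (hfc.mono (by rw [Set.uIcc_of_le h02]; exact Set.Icc_subset_Icc le_rfl h2t)).intervalIntegrable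
  have int2 : IntervalIntegrable f volume (t/2) t :=
    (hfc.mono (by rw [Set.uIcc_of_le h2t]; exact Set.Icc_subset_Icc h02 le_rfl)).intervalIntegrable
  rw [← intervalIntegral.integral_add_adjacent_intervals int1 int2]
  have hp1 : (∫ s in (0:ℝ)..(t/2), f s) ≤ 2/ν*(1+2/ν) * (t+1) ^ (-(1/4):ℝ) := by
    have hmono : (∫ s in (0:ℝ)..(t/2), f s) ≤ ∫ s in (0:ℝ)..(t/2), Real.exp (-ν*t) := by
      apply intervalIntegral.integral_mono_on h02 int1 (intervalIntegrable_const)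
      intro x hx
      have hx0 : 0 ≤ x := hx.1
      have hx2 : x ≤ t/2 := hx.2
      have he : Real.exp (-2*ν*(t-x)) ≤ Real.exp (-ν*t) := by
        apply Real.exp_le_exp.mpr; nlinarith
      have hr : (x+1) ^ (-(1/4):ℝ) ≤ 1 :=
        Real.rpow_le_one_of_one_le_of_nonpos (by linarith) (by norm_num)
      calc f x ≤ Real.exp (-ν*t) * 1 :=
            mul_le_mul he hr (by positivity) (Real.exp_pos _).le
        _ = Real.exp (-ν*t) := mul_one _
    rw [intervalIntegral.integral_const] at hmono
    simp only [smul_eq_mul, sub_zero] at hmono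
    calc (∫ s in (0:ℝ)..(t/2), f s) ≤ t/2 * Real.exp (-ν*t) := hmono
      _ ≤ t * Real.exp (-ν*t) := by
          apply mul_le_mul_of_nonneg_right (by linarith) (Real.exp_pos _).le
      _ ≤ 2/ν*(1+2/ν) * (t+1) ^ (-(1/4):ℝ) := texp_le' ν t hν ht
  have hp2 : (∫ s in (t/2)..t, f s) ≤ 1/ν * (t+1) ^ (-(1/4):ℝ) := by
    have hmono : (∫ s in (t/2)..t, f s)
        ≤ ∫ s in (t/2)..t, Real.exp (2*ν*s + (-2*ν*t)) * (t/2+1) ^ (-(1/4):ℝ) := by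
      apply intervalIntegral.integral_mono_on h2t int2
      · exact ((Real.continuous_exp.comp (by continuity)).mul continuous_const).intervalIntegrable _ _
      intro x hx
      have he : Real.exp (-2*ν*(t-x)) = Real.exp (2*ν*x + (-2*ν*t)) := by ring_nf
      rw [hf_def]
      simp only
      rw [he]
      apply mul_le_mul_of_nonneg_left _ (Real.exp_pos _).le
      exact Real.rpow_le_rpow_of_nonpos (by linarith) (by linarith [hx.1]) (by norm_num)
    rw [intervalIntegral.integral_mul_const,
      exp_lin_integral (2*ν) (-2*ν*t) (t/2) t (by positivity)] at hmono
    have hval : (Real.exp (2*ν*t + -2*ν*t) - Real.exp (2*ν*(t/2) + -2*ν*t)) / (2*ν) ≤ 1/(2*ν) := by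
      rw [div_le_div_iff₀ (by positivity) (by positivity)]
      have h1 : 2*ν*t + -2*ν*t = 0 := by ring
      rw [h1, Real.exp_zero]
      have := (Real.exp_pos (2*ν*(t/2) + -2*ν*t)).le
      nlinarith
    calc (∫ s in (t/2)..t, f s)
        ≤ (Real.exp (2*ν*t + -2*ν*t) - Real.exp (2*ν*(t/2) + -2*ν*t)) / (2*ν)
            * (t/2+1) ^ (-(1/4):ℝ) := hmono
      _ ≤ 1/(2*ν) * (t/2+1) ^ (-(1/4):ℝ) := by
          apply mul_le_mul_of_nonneg_right hval (by positivity)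
      _ ≤ 1/(2*ν) * (2 * (t+1) ^ (-(1/4):ℝ)) := by
          apply mul_le_mul_of_nonneg_left (rpow_half_le t ht) (by positivity)
      _ = 1/ν * (t+1) ^ (-(1/4):ℝ) := by field_simp
  calc (∫ s in (0:ℝ)..(t/2), f s) + (∫ s in (t/2)..t, f s)
      ≤ 2/ν*(1+2/ν) * (t+1) ^ (-(1/4):ℝ) + 1/ν * (t+1) ^ (-(1/4):ℝ) := add_le_add hp1 hp2
    _ = (1/ν + 2/ν*(1+2/ν)) * (t+1) ^ (-(1/4):ℝ) := by ring

set_option maxHeartbeats 1000000 in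
/-- Gronwall-type integral inequality with exponentially decaying kernel: if
`g(t) ≤ a(t+1)^{−1/4} + b e^{−2νt} + ε ∫_0^t e^{−2ν(t−s)} g(s) ds` on `[0,T)`, then for
`ε` small enough (depending only on `ν`) one has `g(t) ≤ C a (t+1)^{−1/4} + C b e^{−νt}`. -/
theorem gronwall_exponential_kernel (ν : ℝ) (hν : 0 < ν) :
    ∃ ε₀ > (0 : ℝ), ∃ C > (0 : ℝ), ∀ (T a b ε : ℝ) (g : ℝ → ℝ),
      0 < a → 0 < b → 0 < ε → ε < ε₀ →
      ContinuousOn g (Set.Ico 0 T) →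
      (∀ t ∈ Set.Ico (0 : ℝ) T, 0 ≤ g t) →
      (∀ t ∈ Set.Ico (0 : ℝ) T,
        g t ≤ a * (t + 1) ^ (-(1/4) : ℝ) + b * Real.exp (-2 * ν * t)
          + ε * ∫ s in (0 : ℝ)..t, Real.exp (-2 * ν * (t - s)) * g s) →
      ∀ t ∈ Set.Ico (0 : ℝ) T,
        g t ≤ C * a * (t + 1) ^ (-(1/4) : ℝ) + C * b * Real.exp (-ν * t) := by
  set K : ℝ := 1/ν + 2/ν*(1+2/ν) with hK_def
  have hK : 0 < K := by positivity
  refine ⟨1/(2*K), by positivity, 2, by norm_num, ?_⟩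
  intro T a b ε g ha hb hε hεε₀ hgc hgnn hineq
  set φ : ℝ → ℝ := fun s => g s - (2*a*(s+1)^(-(1/4):ℝ) + 2*b*Real.exp (-ν*s)) with hφ_def
  have hφcont : ContinuousOn φ (Set.Ico 0 T) := by
    apply hgc.sub
    apply ContinuousOn.add
    · apply ContinuousOn.mul continuousOn_const
      exact (continuousOn_id.add continuousOn_const).rpow_const
        (fun x hx => Or.inl (by have := hx.1; intro h; change x + 1 = 0 at h; linarith))
    · exact (continuous_const.mul (Real.continuous_exp.comp
        (continuous_const.mul continuous_id))).continuousOn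
  intro t ht
  by_contra hcon
  push_neg at hcon
  have hT : 0 < T := lt_of_le_of_lt ht.1 ht.2
  have htS : 0 < φ t := by simp only [hφ_def]; linarith
  set S : Set ℝ := {s | s ∈ Set.Ico (0:ℝ) T ∧ 0 < φ s} with hS_def
  have hSne : S.Nonempty := ⟨t, ht, htS⟩
  have hSbdd : BddBelow S := ⟨0, fun x hx => hx.1.1⟩
  set t₀ : ℝ := sInf S with ht₀_def
  have ht₀0 : 0 ≤ t₀ := le_csInf hSne (fun x hx => hx.1.1)
  have ht₀T : t₀ < T := lt_of_le_of_lt (csInf_le hSbdd ⟨ht, htS⟩) ht.2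
  have ht₀mem : t₀ ∈ Set.Ico (0:ℝ) T := ⟨ht₀0, ht₀T⟩
  have hφt₀_nonneg : 0 ≤ φ t₀ := by
    have hcl : t₀ ∈ closure S := csInf_mem_closure hSne hSbdd
    obtain ⟨u, huS, hul⟩ := mem_closure_iff_seq_limit.mp hcl
    have hu' : Filter.Tendsto u Filter.atTop (nhdsWithin t₀ (Set.Ico 0 T)) :=
      tendsto_nhdsWithin_iff.mpr ⟨hul, Filter.Eventually.of_forall (fun n => (huS n).1)⟩
    have hφu := Filter.Tendsto.comp (hφcont t₀ ht₀mem) hu'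
    exact ge_of_tendsto' hφu (fun n => (huS n).2.le)
  have hbefore : ∀ s, 0 ≤ s → s < t₀ → φ s ≤ 0 := by
    intro s hs0 hst
    by_contra hpos
    push_neg at hpos
    exact absurd (csInf_le hSbdd ⟨⟨hs0, hst.trans ht₀T⟩, hpos⟩) (not_le.mpr hst)
  have ht₀pos : 0 < t₀ := by
    rcases ht₀0.lt_or_eq with h | h
    · exact h
    · exfalso
      have h0mem : (0:ℝ) ∈ Set.Ico (0:ℝ) T := ⟨le_rfl, hT⟩
      have h0 := hineq 0 h0mem
      rw [intervalIntegral.integral_same] at h0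
      norm_num [Real.one_rpow] at h0
      have hφ0 : φ 0 = g 0 - (2*a + 2*b) := by
        simp only [hφ_def]
        norm_num [Real.one_rpow]
      rw [← h] at hφt₀_nonneg
      rw [hφ0] at hφt₀_nonneg
      linarith
  have hφt₀_nonpos : φ t₀ ≤ 0 := by
    have hsub : Set.Ico (0:ℝ) t₀ ⊆ Set.Ico (0:ℝ) T := Set.Ico_subset_Ico le_rfl ht₀T.le
    have hc : Filter.Tendsto φ (nhdsWithin t₀ (Set.Ico 0 t₀)) (nhds (φ t₀)) :=
      (hφcont t₀ ht₀mem).mono hsub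
    haveI hne : (nhdsWithin t₀ (Set.Ico (0:ℝ) t₀)).NeBot := by
      rw [nhdsWithin_Ico_eq_nhdsLT ht₀pos]
      infer_instance
    exact le_of_tendsto hc
      (Filter.eventually_of_mem self_mem_nhdsWithin (fun x hx => hbefore x hx.1 hx.2))
  have hgh : ∀ s ∈ Set.Icc (0:ℝ) t₀,
      g s ≤ 2*a*(s+1)^(-(1/4):ℝ) + 2*b*Real.exp (-ν*s) := by
    intro s hs
    rcases hs.2.lt_or_eq with h | h
    · have := hbefore s hs.1 h
      simp only [hφ_def] at this; linarith
    · have : φ s ≤ 0 := by rw [h]; exact hφt₀_nonpos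
      simp only [hφ_def] at this; linarith
  -- integral estimates at t₀
  have hIccsub : Set.Icc (0:ℝ) t₀ ⊆ Set.Ico 0 T :=
    fun x hx => ⟨hx.1, lt_of_le_of_lt hx.2 ht₀T⟩
  have hgIcc : ContinuousOn g (Set.Icc 0 t₀) := hgc.mono hIccsub
  have hkcont : Continuous (fun s : ℝ => Real.exp (-2*ν*(t₀ - s))) :=
    Real.continuous_exp.comp ((continuous_const.mul continuous_const).mul
      (continuous_const.sub continuous_id))
  have hpcont : ContinuousOn (fun s : ℝ => (s+1)^(-(1/4):ℝ)) (Set.Icc 0 t₀) :=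
    (continuousOn_id.add continuousOn_const).rpow_const
      (fun x hx => Or.inl (by have := hx.1; intro hcontra; change x + 1 = 0 at hcontra; linarith))
  have huIcc : Set.uIcc (0:ℝ) t₀ = Set.Icc 0 t₀ := Set.uIcc_of_le ht₀0
  have hkg_int : IntervalIntegrable (fun s => Real.exp (-2*ν*(t₀-s)) * g s) volume 0 t₀ := by
    apply ContinuousOn.intervalIntegrable
    rw [huIcc]
    exact hkcont.continuousOn.mul hgIcc
  have hkp_int : IntervalIntegrable
      (fun s => Real.exp (-2*ν*(t₀-s)) * (s+1)^(-(1/4):ℝ)) volume 0 t₀ := by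
    apply ContinuousOn.intervalIntegrable
    rw [huIcc]
    exact hkcont.continuousOn.mul hpcont
  have hke_int : IntervalIntegrable
      (fun s => Real.exp (-2*ν*(t₀-s)) * Real.exp (-ν*s)) volume 0 t₀ :=
    (hkcont.mul (Real.continuous_exp.comp (continuous_const.mul continuous_id))).intervalIntegrable _ _
  have hkh_int : IntervalIntegrable
      (fun s => Real.exp (-2*ν*(t₀-s)) * (2*a*(s+1)^(-(1/4):ℝ) + 2*b*Real.exp (-ν*s)))
      volume 0 t₀ := by
    apply ContinuousOn.intervalIntegrable
    rw [huIcc]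
    apply hkcont.continuousOn.mul
    exact (continuousOn_const.mul hpcont).add
      (continuous_const.mul (Real.continuous_exp.comp
        (continuous_const.mul continuous_id))).continuousOn
  have hintmono : (∫ s in (0:ℝ)..t₀, Real.exp (-2*ν*(t₀-s)) * g s)
      ≤ ∫ s in (0:ℝ)..t₀,
          Real.exp (-2*ν*(t₀-s)) * (2*a*(s+1)^(-(1/4):ℝ) + 2*b*Real.exp (-ν*s)) := by
    apply intervalIntegral.integral_mono_on ht₀0 hkg_int hkh_int
    intro x hx
    exact mul_le_mul_of_nonneg_left (hgh x hx) (Real.exp_pos _).le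
  have hsplit : (∫ s in (0:ℝ)..t₀,
        Real.exp (-2*ν*(t₀-s)) * (2*a*(s+1)^(-(1/4):ℝ) + 2*b*Real.exp (-ν*s)))
      = 2*a*(∫ s in (0:ℝ)..t₀, Real.exp (-2*ν*(t₀-s)) * (s+1)^(-(1/4):ℝ))
        + 2*b*(∫ s in (0:ℝ)..t₀, Real.exp (-2*ν*(t₀-s)) * Real.exp (-ν*s)) := by
    rw [intervalIntegral.integral_congr
      (g := fun s => 2*a*(Real.exp (-2*ν*(t₀-s)) * (s+1)^(-(1/4):ℝ))
        + 2*b*(Real.exp (-2*ν*(t₀-s)) * Real.exp (-ν*s))) (fun x _ => by ring)]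
    rw [intervalIntegral.integral_add (hkp_int.const_mul _) (hke_int.const_mul _),
      intervalIntegral.integral_const_mul, intervalIntegral.integral_const_mul]
  set P : ℝ := (t₀+1)^(-(1/4):ℝ) with hP_def
  set E : ℝ := Real.exp (-ν*t₀) with hE_def
  have hPpos : 0 < P := Real.rpow_pos_of_pos (by linarith) _
  have hEpos : 0 < E := Real.exp_pos _
  have hIbound : (∫ s in (0:ℝ)..t₀, Real.exp (-2*ν*(t₀-s)) * g s)
      ≤ 2*a*(K*P) + 2*b*((1/ν)*E) := by
    refine le_trans hintmono ?_
    rw [hsplit]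
    have h1 := intA ν t₀ hν ht₀0
    have h2 := intB ν t₀ hν ht₀0
    have ha' : (0:ℝ) ≤ 2*a := by linarith
    have hb' : (0:ℝ) ≤ 2*b := by linarith
    exact add_le_add (mul_le_mul_of_nonneg_left h1 ha') (mul_le_mul_of_nonneg_left h2 hb')
  have h1ν : 1/ν ≤ K := by
    have : (0:ℝ) ≤ 2/ν*(1+2/ν) := by positivity
    rw [hK_def]; linarith
  have h2εK : ε * (2*K) < 1 := (lt_div_iff₀ (by positivity)).mp hεε₀
  have hE2 : Real.exp (-2*ν*t₀) ≤ E := by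
    rw [hE_def]
    apply Real.exp_le_exp.mpr
    nlinarith
  have hkey : ε * (2*a*(K*P) + 2*b*((1/ν)*E)) < a*P + b*E := by
    have hPE : 0 < a*P + b*E := by positivity
    calc ε * (2*a*(K*P) + 2*b*((1/ν)*E)) ≤ ε * (2*a*(K*P) + 2*b*(K*E)) := by
          apply mul_le_mul_of_nonneg_left _ hε.le
          have : 2*b*((1/ν)*E) ≤ 2*b*(K*E) := by
            apply mul_le_mul_of_nonneg_left _ (by linarith : (0:ℝ) ≤ 2*b)
            exact mul_le_mul_of_nonneg_right h1ν hEpos.le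
          linarith
      _ = (ε * (2*K)) * (a*P + b*E) := by ring
      _ < 1 * (a*P + b*E) := mul_lt_mul_of_pos_right h2εK hPE
      _ = a*P + b*E := one_mul _
  have hgt₀ := hineq t₀ ht₀mem
  have hfin : g t₀ < 2*a*P + 2*b*E := by
    have hεI : ε * (∫ s in (0:ℝ)..t₀, Real.exp (-2 * ν * (t₀ - s)) * g s)
        ≤ ε * (2*a*(K*P) + 2*b*((1/ν)*E)) := by
      apply mul_le_mul_of_nonneg_left _ hε.le
      exact hIbound
    calc g t₀ ≤ a * P + b * Real.exp (-2 * ν * t₀)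
          + ε * ∫ s in (0:ℝ)..t₀, Real.exp (-2 * ν * (t₀ - s)) * g s := hgt₀
      _ ≤ a * P + b * E + ε * (2*a*(K*P) + 2*b*((1/ν)*E)) := by
          have := mul_le_mul_of_nonneg_left hE2 hb.le
          linarith
      _ < a * P + b * E + (a*P + b*E) := by linarith
      _ = 2*a*P + 2*b*E := by ring
  have : 2*a*P + 2*b*E ≤ g t₀ := by
    simp only [hφ_def] at hφt₀_nonneg
    linarith
  linarith
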